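/- Let Y be a scheme over F_p and Y' a relatively perfect Y-scheme. Then for any étale morphism Y'' → Y', the scheme Y'' is also relatively perfect over Y. -/

import Mathlib

open CategoryTheory

/-- A ring map `R → S` in characteristic `p` is *relatively perfect* if the square
formed by the absolute Frobenius endomorphisms of `R` and `S` and the structure map
is cocartesian in the category of commutative rings (equivalently, the relative
Frobenius `Y' → Y'^{(p)}` of the corresponding morphism of schemes is an
isomorphism). -/
def RelativelyPerfect (R S : Type) [CommRing R] [CommRing S] [Algebra R S]
    (p : ℕ) [Fact p.Prime] [CharP R p] [CharP S p] : Prop :=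
  IsPushout
    (CommRingCat.ofHom (frobenius R p))
    (CommRingCat.ofHom (algebraMap R S))
    (CommRingCat.ofHom (algebraMap R S))
    (CommRingCat.ofHom (frobenius S p))

set_option maxHeartbeats 1000000
set_option synthInstance.maxHeartbeats 400000

section FieldFiber
-- fiber lemma: κ field, E κ-algebra, formally unramified, ess finite type,
-- every element's p-th power in range ⇒ range = ⊤.
theorem fiber_range_eq_top (p : ℕ) [Fact p.Prime] (κ E : Type) [Field κ] [CommRing E]
    [Algebra κ E] [Algebra.FormallyUnramified κ E] [Algebra.EssFiniteType κ E]
    [Nontrivial E] (hp : (p : E) = 0)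
    (hpow : ∀ z : E, z ^ p ∈ (algebraMap κ E).range) :
    Function.Surjective (algebraMap κ E) := by
  have hred : IsReduced E := Algebra.FormallyUnramified.isReduced_of_field κ E
  -- every nonzero element is a unit
  have hfield : IsField E := by
    refine ⟨exists_pair_ne E, mul_comm, ?_⟩
    intro z hz
    by_contra hu
    have hnu : ¬ IsUnit z := fun h => by
      obtain ⟨b, hb⟩ := h.exists_right_inv
      exact hu ⟨b, hb⟩
    obtain ⟨c, hc⟩ := hpow z
    have hc0 : c = 0 := by
      by_contra hc0
      exact hnu (IsUnit.of_mul_eq_one (a := z) (z ^ (p - 1) * algebraMap κ E c⁻¹) (by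
        rw [← mul_assoc, ← pow_succ', Nat.sub_add_cancel (Fact.out : p.Prime).one_le,
          ← hc, ← map_mul, mul_inv_cancel₀ hc0, map_one]))
    have : z ^ p = 0 := by rw [← hc, hc0, map_zero]
    exact hz (hred.1 z ⟨p, this⟩)
  letI : Field E := hfield.toField
  haveI : CharP E p := by
    rcases CharP.exists E with ⟨q, hq⟩
    haveI := hq
    have : q ∣ p := (CharP.cast_eq_zero_iff E q p).mp hp
    rcases ((Fact.out : p.Prime).eq_one_or_self_of_dvd q this) with h1 | hqp
    · exact absurd (CharP.char_ne_one E q) (by simp [h1])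
    · rwa [hqp] at hq
  haveI : CharP κ p := (algebraMap κ E).charP (algebraMap κ E).injective p
  haveI : ExpChar κ p := ExpChar.prime Fact.out
  haveI : IsPurelyInseparable κ E := by
    rw [isPurelyInseparable_iff_pow_mem κ p]
    intro x
    exact ⟨1, by simpa using hpow x⟩
  have := Algebra.FormallyUnramified.range_eq_top_of_isPurelyInseparable κ E
  intro x
  have : x ∈ (algebraMap κ E).range := this ▸ trivial
  exact this
end FieldFiber

section LemmaA
variable (p : ℕ) [Fact p.Prime] (S T : Type) [CommRing S] [CommRing T]
    [Algebra S T] [CharP T p]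

theorem adjoin_pow_eq_top [Algebra.FormallyUnramified S T] [Algebra.FiniteType S T] :
    Algebra.adjoin S (Set.range fun t : T => t ^ p) = ⊤ := by
  set B₀ := Algebra.adjoin S (Set.range fun t : T => t ^ p) with hB₀
  have hmem : ∀ t : T, t ^ p ∈ B₀ := fun t => Algebra.subset_adjoin ⟨t, rfl⟩
  haveI : Algebra.FiniteType ↥B₀ T :=
    Algebra.FiniteType.of_restrictScalars_finiteType (R := S) (S := ↥B₀) (A := T)
  haveI : Algebra.IsIntegral ↥B₀ T := by
    refine ⟨fun t => IsIntegral.of_pow (Fact.out : p.Prime).pos ?_⟩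
    have h : (t : T) ^ p = algebraMap ↥B₀ T ⟨t ^ p, hmem t⟩ := rfl
    rw [h]; exact isIntegral_algebraMap
  haveI : Module.Finite ↥B₀ T := Algebra.IsIntegral.finite
  haveI : Algebra.FormallyUnramified ↥B₀ T := Algebra.FormallyUnramified.of_restrictScalars S ↥B₀ T
  set N : Submodule ↥B₀ T := LinearMap.range (Algebra.linearMap ↥B₀ T) with hN
  suffices hNtop : N = ⊤ by
    rw [Algebra.eq_top_iff]
    intro t
    have ht : t ∈ N := hNtop ▸ Submodule.mem_top
    obtain ⟨b, rfl⟩ := ht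
    exact b.2
  -- key fiberwise claim
  have key : ∀ q : Ideal ↥B₀, q.IsMaximal →
      (⊤ : Submodule ↥B₀ T) ≤ N ⊔ (q • (⊤ : Submodule ↥B₀ T)) := by
    intro q hq
    set J : Ideal T := q.map (algebraMap ↥B₀ T) with hJ
    have hqsmul : (q • (⊤ : Submodule ↥B₀ T)) = J.restrictScalars ↥B₀ :=
      Ideal.smul_top_eq_map q
    letI : Algebra (↥B₀ ⧸ q) (T ⧸ J) :=
      Ideal.Quotient.algebraQuotientOfLEComap (Ideal.le_comap_map)
    haveI : IsScalarTower ↥B₀ (↥B₀ ⧸ q) (T ⧸ J) := by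
      refine ⟨fun x y z => ?_⟩
      obtain ⟨y, rfl⟩ := Ideal.Quotient.mk_surjective y
      obtain ⟨z, rfl⟩ := Ideal.Quotient.mk_surjective z
      have h1 : x • Ideal.Quotient.mk q y = Ideal.Quotient.mk q (x * y) := rfl
      have h2 : ∀ (b : ↥B₀) (t : T), (Ideal.Quotient.mk q b) • Ideal.Quotient.mk J t
          = Ideal.Quotient.mk J (algebraMap ↥B₀ T b * t) := fun b t => rfl
      have h3 : ∀ (t : T), x • Ideal.Quotient.mk J t = Ideal.Quotient.mk J (x • t) := fun t => rfl
      rw [h1, h2, h2, h3]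
      congr 1
      show (algebraMap ↥B₀ T x * algebraMap ↥B₀ T y) * z = x • (algebraMap ↥B₀ T y * z)
      rw [Algebra.smul_def, mul_assoc]
    letI : Field (↥B₀ ⧸ q) := Ideal.Quotient.field q
    haveI : Algebra.FormallyUnramified ↥B₀ (T ⧸ J) := Algebra.FormallyUnramified.quotient J
    haveI : Algebra.FormallyUnramified (↥B₀ ⧸ q) (T ⧸ J) :=
      Algebra.FormallyUnramified.of_restrictScalars ↥B₀ (↥B₀ ⧸ q) (T ⧸ J)
    haveI : Module.Finite ↥B₀ (T ⧸ J) :=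
      Module.Finite.of_surjective (Ideal.Quotient.mkₐ ↥B₀ J).toLinearMap
        Ideal.Quotient.mk_surjective
    haveI : Module.Finite (↥B₀ ⧸ q) (T ⧸ J) :=
      Module.Finite.of_restrictScalars_finite ↥B₀ (↥B₀ ⧸ q) (T ⧸ J)
    haveI : Algebra.EssFiniteType (↥B₀ ⧸ q) (T ⧸ J) :=
      Algebra.EssFiniteType.of_finiteType (↥B₀ ⧸ q) (T ⧸ J)
    rcases subsingleton_or_nontrivial (T ⧸ J) with hsub | hnt
    · -- J = ⊤
      have hJtop : J = ⊤ := by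
        rw [Ideal.eq_top_iff_one, ← Ideal.Quotient.eq_zero_iff_mem]
        exact Subsingleton.elim _ _
      intro t _
      refine Submodule.mem_sup.mpr ⟨0, Submodule.zero_mem N, t, ?_, by simp⟩
      rw [hqsmul, hJtop]
      trivial
    · -- fiber surjectivity
      have hpE : ((p : ℕ) : T ⧸ J) = 0 := by
        have : ((p : ℕ) : T) = 0 := CharP.cast_eq_zero T p
        have h2 := map_natCast (Ideal.Quotient.mk J) p
        rw [this] at h2
        simpa using h2.symm
      have hpow : ∀ z : T ⧸ J, z ^ p ∈ (algebraMap (↥B₀ ⧸ q) (T ⧸ J)).range := by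
        intro z
        obtain ⟨t, rfl⟩ := Ideal.Quotient.mk_surjective z
        refine ⟨Ideal.Quotient.mk q ⟨t ^ p, hmem t⟩, ?_⟩
        have h1 : algebraMap (↥B₀ ⧸ q) (T ⧸ J) (Ideal.Quotient.mk q ⟨t ^ p, hmem t⟩)
            = algebraMap ↥B₀ (T ⧸ J) ⟨t ^ p, hmem t⟩ :=
          (IsScalarTower.algebraMap_apply ↥B₀ (↥B₀ ⧸ q) (T ⧸ J) _).symm
        rw [h1]
        show Ideal.Quotient.mk J (algebraMap ↥B₀ T ⟨t ^ p, hmem t⟩) = _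
        rw [show algebraMap ↥B₀ T ⟨t ^ p, hmem t⟩ = t ^ p from rfl, map_pow]
      have hsurj := fiber_range_eq_top p (↥B₀ ⧸ q) (T ⧸ J) hpE hpow
      intro t _
      obtain ⟨k, hk⟩ := hsurj (Ideal.Quotient.mk J t)
      obtain ⟨b, rfl⟩ := Ideal.Quotient.mk_surjective k
      have hb : algebraMap (↥B₀ ⧸ q) (T ⧸ J) (Ideal.Quotient.mk q b)
          = Ideal.Quotient.mk J (algebraMap ↥B₀ T b) :=
        (IsScalarTower.algebraMap_apply ↥B₀ (↥B₀ ⧸ q) (T ⧸ J) b).symm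
      have hdiff : t - algebraMap ↥B₀ T b ∈ J := by
        rw [← Ideal.Quotient.eq_zero_iff_mem, map_sub, ← hb, hk, sub_self]
      refine Submodule.mem_sup.mpr ⟨algebraMap ↥B₀ T b, ⟨b, rfl⟩, t - algebraMap ↥B₀ T b, ?_, by ring⟩
      rw [hqsmul]
      exact hdiff
  -- Nakayama
  by_contra hne
  haveI : Nontrivial (T ⧸ N) := Submodule.Quotient.nontrivial_iff.mpr hne
  haveI : Module.Finite ↥B₀ (T ⧸ N) := Module.Finite.quotient ↥B₀ N
  set I : Ideal ↥B₀ :=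
    { carrier := {r | ∀ m : T ⧸ N, r • m = 0}
      add_mem' := fun ha hb m => by rw [add_smul, ha m, hb m, add_zero]
      zero_mem' := fun m => zero_smul _ m
      smul_mem' := fun c r hr m => by rw [smul_eq_mul, mul_smul, hr m, smul_zero] } with hI
  have hInetop : I ≠ ⊤ := by
    intro h
    obtain ⟨m, hm⟩ := exists_ne (0 : T ⧸ N)
    have : (1 : ↥B₀) ∈ I := h ▸ Submodule.mem_top
    exact hm (by simpa using this m)
  obtain ⟨q, hqmax, hIq⟩ := Ideal.exists_le_maximal I hInetop
  -- apply Nakayama over q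
  have hle : (⊤ : Submodule ↥B₀ (T ⧸ N)) ≤ q • ⊤ := by
    intro m _
    obtain ⟨t, rfl⟩ := Submodule.Quotient.mk_surjective N m
    have ht := key q hqmax (Submodule.mem_top (x := t))
    obtain ⟨n, hn, y, hy, rfl⟩ := Submodule.mem_sup.mp ht
    have h1 : Submodule.Quotient.mk (p := N) (n + y) = Submodule.Quotient.mk y := by
      rw [Submodule.Quotient.mk_add, (Submodule.Quotient.mk_eq_zero N).mpr hn, zero_add]
    rw [h1]
    have : Submodule.Quotient.mk (p := N) y ∈
        Submodule.map (N.mkQ) (q • (⊤ : Submodule ↥B₀ T)) := ⟨y, hy, rfl⟩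
    rw [Submodule.map_smul''] at this
    exact smul_mono_right q (le_top (a := Submodule.map N.mkQ (⊤ : Submodule ↥B₀ T))) this
  obtain ⟨r, hr1, hr0⟩ := Submodule.exists_sub_one_mem_and_smul_eq_zero_of_fg_of_le_smul q ⊤
    (Module.finite_def.mp ‹Module.Finite ↥B₀ (T ⧸ N)›) hle
  have hrI : r ∈ I := fun m => hr0 m Submodule.mem_top
  have : (1 : ↥B₀) ∈ q := by
    have := q.sub_mem (hIq hrI) hr1
    simpa using this
  exact hqmax.ne_top (q.eq_top_iff_one.mpr this)
end LemmaA

section LemmaB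

private lemma charP_aux (p : ℕ) [Fact p.Prime] (A : Type) [CommRing A] [Nontrivial A]
    (hp : ((p : ℕ) : A) = 0) : CharP A p := by
  rcases CharP.exists A with ⟨q, hq⟩
  haveI := hq
  have hdvd : q ∣ p := (CharP.cast_eq_zero_iff A q p).mp hp
  rcases (Fact.out : p.Prime).eq_one_or_self_of_dvd q hdvd with h1 | hqp
  · exact absurd (CharP.char_ne_one A q) (by simp [h1])
  · rwa [hqp] at hq

variable (p : ℕ) [Fact p.Prime] (S T : Type) [CommRing S] [CommRing T] [Algebra S T]
  [CharP S p] [CharP T p]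

theorem desc_unique (het : Algebra.Etale S T) (A : Type) [CommRing A]
    (c₁ c₂ : T →+* A) (hs : ∀ s, c₁ (algebraMap S T s) = c₂ (algebraMap S T s))
    (hpow : ∀ t, c₁ (t ^ p) = c₂ (t ^ p)) : c₁ = c₂ := by
  haveI := het.formallyEtale
  haveI := het.finitePresentation
  have hadj := adjoin_pow_eq_top p S T
  ext t
  have ht : t ∈ Algebra.adjoin S (Set.range fun u : T => u ^ p) := hadj ▸ Algebra.mem_top
  induction ht using Algebra.adjoin_induction with
  | mem x hx => obtain ⟨u, rfl⟩ := hx; exact hpow u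
  | algebraMap s => exact hs s
  | add x y _ _ hx hy => rw [map_add, map_add, hx, hy]
  | mul x y _ _ hx hy => rw [map_mul, map_mul, hx, hy]

theorem exists_desc (het : Algebra.Etale S T) (A : Type) [CommRing A]
    (d : S →+* A) (b : T →+* A)
    (hcomp : ∀ s : S, d (s ^ p) = b (algebraMap S T s)) :
    ∃ c : T →+* A, (∀ s, c (algebraMap S T s) = d s) ∧ ∀ t, c (t ^ p) = b t := by
  rcases subsingleton_or_nontrivial A with hA | hA
  · refine ⟨{ toFun := fun _ => 1
              map_one' := rfl
              map_mul' := fun _ _ => Subsingleton.elim _ _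
              map_zero' := Subsingleton.elim _ _
              map_add' := fun _ _ => Subsingleton.elim _ _ }, 
        fun s => Subsingleton.elim _ _, fun t => Subsingleton.elim _ _⟩
  haveI : CharP A p := charP_aux p A (by
    have h1 : ((p : ℕ) : A) = d ((p : ℕ) : S) := by rw [map_natCast]
    rw [h1, CharP.cast_eq_zero S p, map_zero])
  haveI := het.formallyEtale
  haveI := het.finitePresentation
  -- the subring C ⊆ A × T of pairs (x, t) with x ^ p = b t
  set Csub : Subring (A × T) :=
    RingHom.eqLocus ((frobenius A p).comp (RingHom.fst A T)) (b.comp (RingHom.snd A T)) with hCsub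
  have hmemC : ∀ z : A × T, z ∈ Csub ↔ z.1 ^ p = b z.2 := fun z => Iff.rfl
  -- S-algebra structure on C
  set sC : S →+* ↥Csub := RingHom.codRestrict (d.prod (algebraMap S T)) Csub (fun s => by
    show (d s) ^ p = b (algebraMap S T s)
    rw [← map_pow, hcomp]) with hsC
  letI : Algebra S ↥Csub := sC.toAlgebra
  set πₐ : ↥Csub →ₐ[S] T :=
    { toRingHom := (RingHom.snd A T).comp Csub.subtype, commutes' := fun s => rfl } with hπₐ
  -- π is surjective
  have hπsurj : Function.Surjective πₐ := by
    have hadj := adjoin_pow_eq_top p S T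
    have hle : Algebra.adjoin S (Set.range fun u : T => u ^ p) ≤ πₐ.range := by
      rw [Algebra.adjoin_le_iff]
      rintro x ⟨u, rfl⟩
      exact ⟨⟨(b u, u ^ p), show (b u) ^ p = b (u ^ p) by rw [map_pow]⟩, rfl⟩
    intro t
    exact hle (hadj ▸ Algebra.mem_top (A := T) (x := t))
  -- finite presentation of T
  obtain ⟨n, f, hfsurj, hker⟩ := het.finitePresentation.out
  choose g hg using fun i : Fin n => hπsurj (f (MvPolynomial.X i))
  set φ : MvPolynomial (Fin n) S →ₐ[S] ↥Csub := MvPolynomial.aeval g with hφ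
  have hπφ : ∀ a, πₐ (φ a) = f a := by
    have h : πₐ.comp φ = f := MvPolynomial.algHom_ext (fun i => by
      simp only [hφ, AlgHom.comp_apply, MvPolynomial.aeval_X]
      exact hg i)
    exact fun a => DFunLike.congr_fun h a
  set K₀ : Ideal ↥Csub := (RingHom.ker f.toRingHom).map φ.toRingHom with hK₀
  have hK₀le : K₀ ≤ RingHom.ker πₐ.toRingHom := by
    rw [hK₀, Ideal.map_le_iff_le_comap]
    intro a ha
    show φ a ∈ RingHom.ker πₐ.toRingHom
    rw [RingHom.mem_ker] at ha ⊢
    show πₐ (φ a) = 0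
    rw [hπφ]
    exact ha
  have hkernil : ∀ z : ↥Csub, πₐ z = 0 → z ^ p = 0 := by
    intro z hz
    have hz2 : (z : A × T).2 = 0 := hz
    have hz1 : (z : A × T).1 ^ p = b (z : A × T).2 := z.2
    apply Subtype.ext
    have hco : ((z ^ p : ↥Csub) : A × T) = ((z : A × T)) ^ p := SubmonoidClass.coe_pow z p
    rw [hco]
    have h1 : (z : A × T).1 ^ p = 0 := by rw [hz1, hz2, map_zero]
    have h2 : (z : A × T).2 ^ p = 0 := by
      rw [hz2]
      exact zero_pow (Fact.out : p.Prime).ne_zero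
    have : ((z : A × T)) ^ p = ((z : A × T).1 ^ p, (z : A × T).2 ^ p) := rfl
    rw [this, h1, h2]
    rfl
  have hK₀nil : IsNilpotent K₀ := by
    have hle : K₀ ≤ Ideal.radical ⊥ := by
      intro z hz
      have hz0 : πₐ z = 0 := hK₀le hz
      exact ⟨p, by simpa using hkernil z hz0⟩
    obtain ⟨k, hk⟩ := Ideal.exists_pow_le_of_le_radical_of_fg hle (hker.map φ.toRingHom)
    exact ⟨k, le_bot_iff.mp hk⟩
  -- build the section σ : T → C
  set e1 : (MvPolynomial (Fin n) S ⧸ RingHom.ker f.toRingHom) ≃ₐ[S] T :=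
    Ideal.quotientKerAlgEquivOfSurjective (f := f) hfsurj with he1
  set lift0 : (MvPolynomial (Fin n) S ⧸ RingHom.ker f.toRingHom) →ₐ[S] (↥Csub ⧸ K₀) :=
    Ideal.Quotient.liftₐ (RingHom.ker f.toRingHom) ((Ideal.Quotient.mkₐ S K₀).comp φ)
      (fun a ha => by
        have hmem : φ a ∈ K₀ := Ideal.mem_map_of_mem _ ha
        simpa [Ideal.Quotient.eq_zero_iff_mem] using hmem) with hlift0
  set ψ : T →ₐ[S] (↥Csub ⧸ K₀) := lift0.comp (e1.symm : T →ₐ[S] _) with hψ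
  set σ : T →ₐ[S] ↥Csub := Algebra.FormallySmooth.lift K₀ hK₀nil ψ with hσ
  have hσspec : ∀ t, Ideal.Quotient.mkₐ S K₀ (σ t) = ψ t := fun t =>
    DFunLike.congr_fun (Algebra.FormallySmooth.comp_lift (R := S) K₀ hK₀nil ψ) t
  -- π ∘ σ = id
  set πbar : (↥Csub ⧸ K₀) →ₐ[S] T := Ideal.Quotient.liftₐ K₀ πₐ (fun a ha => hK₀le ha) with hπbar
  have hπσ : ∀ t, πₐ (σ t) = t := by
    intro t
    obtain ⟨a, rfl⟩ := hfsurj t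
    have h1 : πₐ (σ (f a)) = πbar (Ideal.Quotient.mkₐ S K₀ (σ (f a))) := rfl
    rw [h1, hσspec, hψ]
    have h2 : e1.symm (f a) = Ideal.Quotient.mk (RingHom.ker f.toRingHom) a := by
      apply e1.injective
      rw [AlgEquiv.apply_symm_apply]
      show f a = e1 (Ideal.Quotient.mk (RingHom.ker f.toRingHom) a)
      rw [he1]
      rfl
    show πbar (lift0 (e1.symm (f a))) = f a
    rw [h2]
    show πbar (Ideal.Quotient.mkₐ S K₀ (φ a)) = f a
    show πₐ (φ a) = f a
    exact hπφ a
  -- finally the map c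
  refine ⟨(RingHom.fst A T).comp (Csub.subtype.comp σ.toRingHom), ?_, ?_⟩
  · intro s
    have h1 : σ (algebraMap S T s) = algebraMap S ↥Csub s := σ.commutes s
    show ((σ (algebraMap S T s) : A × T)).1 = d s
    rw [h1]
    rfl
  · intro t
    have h1 : σ (t ^ p) = σ t ^ p := map_pow σ t p
    show ((σ (t ^ p) : A × T)).1 = b t
    rw [h1]
    have hco : ((σ t ^ p : ↥Csub) : A × T) = ((σ t : A × T)) ^ p := SubmonoidClass.coe_pow _ p
    rw [hco]
    have hmem : ((σ t : A × T)).1 ^ p = b ((σ t : A × T)).2 := (σ t).2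
    have h2 : ((σ t : A × T)).2 = t := hπσ t
    show ((σ t : A × T)).1 ^ p = b t
    rw [hmem, h2]
end LemmaB

section Cat
open CategoryTheory

theorem etale_isPushout (p : ℕ) [Fact p.Prime] (S T : Type) [CommRing S] [CommRing T]
    [Algebra S T] [CharP S p] [CharP T p] (het : Algebra.Etale S T) :
    IsPushout (CommRingCat.ofHom (frobenius S p)) (CommRingCat.ofHom (algebraMap S T))
      (CommRingCat.ofHom (algebraMap S T)) (CommRingCat.ofHom (frobenius T p)) := by
  have weq : CommRingCat.ofHom (frobenius S p) ≫ CommRingCat.ofHom (algebraMap S T)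
      = CommRingCat.ofHom (algebraMap S T) ≫ CommRingCat.ofHom (frobenius T p) := by
    show CommRingCat.ofHom ((algebraMap S T).comp (frobenius S p))
        = CommRingCat.ofHom ((frobenius T p).comp (algebraMap S T))
    congr 1
    ext s
    show algebraMap S T (s ^ p) = (algebraMap S T s) ^ p
    rw [map_pow]
  have hdesc : ∀ s' : Limits.PushoutCocone (CommRingCat.ofHom (frobenius S p))
      (CommRingCat.ofHom (algebraMap S T)),
      ∃ c : T →+* ↑s'.pt, (∀ x, c (algebraMap S T x) = s'.inl x) ∧ ∀ t, c (t ^ p) = s'.inr t := by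
    intro s'
    refine exists_desc p S T het ↑s'.pt s'.inl.hom s'.inr.hom (fun x => ?_)
    have h := DFunLike.congr_fun (congrArg CommRingCat.Hom.hom s'.condition) x
    simpa [CommRingCat.comp_apply, frobenius_def] using h
  refine CategoryTheory.IsPushout.of_isColimit
    (Limits.PushoutCocone.IsColimit.mk weq (fun s' => CommRingCat.ofHom ((hdesc s').choose : T →+* ↑s'.pt))
      (fun s' => ?_) (fun s' => ?_) (fun s' m h1 h2 => ?_))
  · exact CommRingCat.hom_ext <| RingHom.ext fun x => (hdesc s').choose_spec.1 x
  · exact CommRingCat.hom_ext <| RingHom.ext fun t => (hdesc s').choose_spec.2 t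
  · refine CommRingCat.hom_ext <| desc_unique p S T het ↑s'.pt m.hom (hdesc s').choose (fun x => ?_) (fun t => ?_)
    · have := DFunLike.congr_fun (congrArg CommRingCat.Hom.hom h1) x
      simpa [CommRingCat.comp_apply] using this.trans ((hdesc s').choose_spec.1 x).symm
    · have := DFunLike.congr_fun (congrArg CommRingCat.Hom.hom h2) t
      have h2' : m (t ^ p) = s'.inr t := by simpa [CommRingCat.comp_apply, frobenius_def] using this
      rw [h2', ← (hdesc s').choose_spec.2 t]
end Cat

open CategoryTheory in
theorem stmt_5' (p : ℕ) [Fact p.Prime] (R S T : Type) [CommRing R] [CommRing S]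
    [CommRing T] [Algebra R S] [Algebra S T] [Algebra R T] [IsScalarTower R S T]
    [CharP R p] [CharP S p] [CharP T p]
    (hrp : IsPushout (CommRingCat.ofHom (frobenius R p)) (CommRingCat.ofHom (algebraMap R S))
      (CommRingCat.ofHom (algebraMap R S)) (CommRingCat.ofHom (frobenius S p)))
    (hetale : Algebra.Etale S T) :
    IsPushout (CommRingCat.ofHom (frobenius R p)) (CommRingCat.ofHom (algebraMap R T))
      (CommRingCat.ofHom (algebraMap R T)) (CommRingCat.ofHom (frobenius T p)) := by
  have h2 := etale_isPushout p S T hetale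
  have h3 := hrp.paste_vert h2
  have heq : CommRingCat.ofHom (algebraMap R T)
      = CommRingCat.ofHom (algebraMap R S) ≫ CommRingCat.ofHom (algebraMap S T) := by
    show CommRingCat.ofHom (algebraMap R T)
        = CommRingCat.ofHom ((algebraMap S T).comp (algebraMap R S))
    rw [IsScalarTower.algebraMap_eq R S T]
  rw [heq]
  exact h3


/-- **Étale over relatively perfect is relatively perfect** (affine version):
if `Y' = Spec S` is relatively perfect over `Y = Spec R` (characteristic `p`) and
`Y'' = Spec T → Y'` is étale, then `Y''` is relatively perfect over `Y`. -/
theorem stmt_5 (p : ℕ) [Fact p.Prime] (R S T : Type) [CommRing R] [CommRing S]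
    [CommRing T] [Algebra R S] [Algebra S T] [Algebra R T] [IsScalarTower R S T]
    [CharP R p] [CharP S p] [CharP T p]
    (hrp : RelativelyPerfect R S p)
    (hetale : Algebra.Etale S T) :
    RelativelyPerfect R T p := by
  exact stmt_5' p R S T hrp hetale
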